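/- If a ℤ²-tiling f of a Wang tile set W is periodic (has some nonzero periodicity vector), then W admits a ℤ²-tiling that is vertically periodic, i.e., a tiling f' and v_y > 0 with f'(x, y) = f'(x, y + v_y) for all (x, y) ∈ ℤ². -/

import Mathlib

/-- A Wang tile over a set of colors `C`. -/
structure WangTile (C : Type*) where
  west : C
  south : C
  east : C
  north : C
deriving DecidableEq

variable {C : Type*}

/-- `f` is a valid tiling of the discrete plane `ℤ²` by the tile set `W`. -/
def IsZTiling (W : Finset (WangTile C)) (f : ℤ × ℤ → WangTile C) : Prop :=
  ∀ x y : ℤ, f (x, y) ∈ W ∧ (f (x, y)).east = (f (x + 1, y)).west ∧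
    (f (x, y)).north = (f (x, y + 1)).south

/-- `g` is a valid tiling of the first quadrant `ℕ²` by the tile set `W`. -/
def IsNTiling (W : Finset (WangTile C)) (g : ℕ × ℕ → WangTile C) : Prop :=
  ∀ x y : ℕ, g (x, y) ∈ W ∧ (g (x, y)).east = (g (x + 1, y)).west ∧
    (g (x, y)).north = (g (x, y + 1)).south

/-- A `ℤ²`-tiling is periodic if it has a nonzero periodicity vector. -/
def PeriodicTiling (f : ℤ × ℤ → WangTile C) : Prop :=
  ∃ v : ℤ × ℤ, v ≠ 0 ∧ ∀ t : ℤ × ℤ, f (t + v) = f t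

/-- An `ℕ²`-tiling is y-recurrent if two distinct rows have the same horizontal word
(sequence of south colors). -/
def YRecurrent (g : ℕ × ℕ → WangTile C) : Prop :=
  ∃ i j : ℕ, i ≠ j ∧ ∀ x : ℕ, (g (x, i)).south = (g (x, j)).south

-- uniqueness of ediv/emod
lemma uniqdiv (b q r : ℤ) (hb : 0 < b) (h0 : 0 ≤ r) (hrb : r < b) :
    (b * q + r) / b = q ∧ (b * q + r) % b = r := by
  constructor
  · have h1 : b * q + r = r + b * q := by ring
    rw [h1, Int.add_mul_ediv_left r q hb.ne', Int.ediv_eq_zero_of_lt h0 hrb, zero_add]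
  · have h1 : b * q + r = r + b * q := by ring
    rw [h1, Int.add_mul_emod_self_left, Int.emod_eq_of_lt h0 hrb]

lemma rowCase (W : Finset (WangTile C)) (f : ℤ × ℤ → WangTile C) (hf : IsZTiling W f)
    (y1 y2 : ℤ) (h12 : y1 < y2) (heq : ∀ x, f (x, y1) = f (x, y2)) :
    ∃ (f' : ℤ × ℤ → WangTile C) (vy : ℤ), IsZTiling W f' ∧ 0 < vy ∧
      ∀ x y : ℤ, f' (x, y) = f' (x, y + vy) := by
  set p := y2 - y1 with hpdef
  have hp : 0 < p := by omega
  refine ⟨fun t => f (t.1, y1 + (t.2 - y1) % p), p, ?_, hp, ?_⟩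
  · intro x y
    have hr0 : 0 ≤ (y - y1) % p := Int.emod_nonneg _ hp.ne'
    have hrp : (y - y1) % p < p := Int.emod_lt_of_pos _ hp
    refine ⟨(hf _ _).1, (hf _ _).2.1, ?_⟩
    -- vertical
    simp only
    have hstep : (y + 1 - y1) % p = ((y - y1) % p + 1) % p := by
      have h1 : y + 1 - y1 = ((y - y1) % p + 1) + p * ((y - y1) / p) := by
        have := Int.mul_ediv_add_emod (y - y1) p; omega
      rw [h1, Int.add_mul_emod_self_left]
    by_cases hc : (y - y1) % p = p - 1
    · have h2 : (y + 1 - y1) % p = 0 := by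
        rw [hstep, hc]
        simp [Int.sub_add_cancel, Int.emod_self]
      rw [hc, h2]
      have h3 := (hf x (y1 + (p - 1))).2.2
      have h4 : y1 + (p - 1) + 1 = y2 := by omega
      rw [h4] at h3
      rw [h3, ← heq x]
      norm_num
    · have h2 : (y + 1 - y1) % p = (y - y1) % p + 1 := by
        rw [hstep, Int.emod_eq_of_lt (by omega) (by omega)]
      rw [h2]
      have h3 := (hf x (y1 + (y - y1) % p)).2.2
      have h4 : y1 + (y - y1) % p + 1 = y1 + ((y - y1) % p + 1) := by ring
      rw [h4] at h3
      exact h3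
  · intro x y
    simp only
    have : (y + p - y1) % p = (y - y1) % p := by
      have h1 : y + p - y1 = (y - y1) + 1 * p := by ring
      rw [h1, Int.add_mul_emod_self_right]
    rw [this]

lemma stripCase (W : Finset (WangTile C)) (f : ℤ × ℤ → WangTile C) (hf : IsZTiling W f)
    (a b x1 p : ℤ) (hb : 0 < b) (hp : 0 < p) (hNp : (a.natAbs : ℤ) < p)
    (hper : ∀ x y : ℤ, f (x + a, y + b) = f (x, y))
    (hP : ∀ j r : ℤ, -(a.natAbs : ℤ) ≤ j → j ≤ (a.natAbs : ℤ) → 0 ≤ r → r < b →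
      f (x1 + j, r) = f (x1 + p + j, r)) :
    ∃ (f' : ℤ × ℤ → WangTile C) (vy : ℤ), IsZTiling W f' ∧ 0 < vy ∧
      ∀ x y : ℤ, f' (x, y) = f' (x, y + vy) := by
  have haN1 : -(a.natAbs : ℤ) ≤ a := by omega
  have haN2 : a ≤ (a.natAbs : ℤ) := by omega
  -- key periodization lemma
  have key : ∀ m : ℤ, 0 ≤ m → m < p → ∀ r : ℤ, 0 ≤ r → r < b →
      f (x1 + (m - a) % p, r) = f (x1 + (m - a), r) := by
    intro m hm0 hmp r hr0 hrb
    set m' := (m - a) % p with hm'def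
    have hm'0 : 0 ≤ m' := Int.emod_nonneg _ hp.ne'
    have hm'p : m' < p := Int.emod_lt_of_pos _ hp
    set d := (m - a) / p with hddef
    have hde : p * d + m' = m - a := Int.mul_ediv_add_emod _ _
    have hd : d = -1 ∨ d = 0 ∨ d = 1 := by
      rcases lt_trichotomy d 0 with h | h | h
      · left
        by_contra hcon
        have : d ≤ -2 := by omega
        nlinarith
      · right; left; exact h
      · right; right
        by_contra hcon
        have : 2 ≤ d := by omega
        nlinarith
    rcases hd with h | h | h
    · -- m' = m - a + p ; j := m - a ∈ [-N, 0)
      rw [h, mul_neg_one] at hde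
      have := hP (m - a) r (by omega) (by omega) hr0 hrb
      have he : x1 + p + (m - a) = x1 + m' := by omega
      rw [he] at this
      exact this.symm
    · rw [h, mul_zero] at hde
      have he : x1 + m' = x1 + (m - a) := by omega
      rw [he]
    · -- m' = m - a - p
      rw [h, mul_one] at hde
      have := hP m' r (by omega) (by omega) hr0 hrb
      have he : x1 + p + m' = x1 + (m - a) := by omega
      rw [he] at this
      exact this
  refine ⟨fun t => f (x1 + (t.1 - (t.2 / b) * a - x1) % p, t.2 % b), p * b, ?_,
    mul_pos hp hb, ?_⟩
  · intro x y
    have hr0 : 0 ≤ y % b := Int.emod_nonneg _ hb.ne'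
    have hrb : y % b < b := Int.emod_lt_of_pos _ hb
    set z := x - (y / b) * a - x1 with hzdef
    have hm0 : 0 ≤ z % p := Int.emod_nonneg _ hp.ne'
    have hmp : z % p < p := Int.emod_lt_of_pos _ hp
    refine ⟨(hf _ _).1, ?_, ?_⟩
    · -- horizontal
      simp only
      have hz1 : x + 1 - (y / b) * a - x1 = z + 1 := by ring
      rw [hz1]
      have hstep : (z + 1) % p = (z % p + 1) % p := by
        have h1 : z + 1 = (z % p + 1) + p * (z / p) := by
          have := Int.mul_ediv_add_emod z p; omega
        rw [h1, Int.add_mul_emod_self_left]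
      by_cases hc : z % p = p - 1
      · have h2 : (z + 1) % p = 0 := by
          rw [hstep, hc]
          simp [Int.sub_add_cancel, Int.emod_self]
        rw [hc, h2, add_zero]
        have h3 := (hf (x1 + (p - 1)) (y % b)).2.1
        have h4 : x1 + (p - 1) + 1 = x1 + p + 0 := by ring
        rw [h4] at h3
        rw [h3, ← hP 0 (y % b) (by omega) (by omega) hr0 hrb]
        norm_num
      · have h2 : (z + 1) % p = z % p + 1 := by
          rw [hstep, Int.emod_eq_of_lt (by omega) (by omega)]
        rw [h2]
        have h3 := (hf (x1 + z % p) (y % b)).2.1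
        have h4 : x1 + z % p + 1 = x1 + (z % p + 1) := by ring
        rw [h4] at h3
        exact h3
    · -- vertical
      simp only
      have hy : y = b * (y / b) + y % b := (Int.mul_ediv_add_emod y b).symm
      by_cases hc : y % b = b - 1
      · have hy1 : y + 1 = b * (y / b + 1) + 0 := by
          rw [mul_add, mul_one]; linarith [hy, hc]
        have hu := uniqdiv b (y / b + 1) 0 hb le_rfl hb
        have hdiv : (y + 1) / b = y / b + 1 := by rw [hy1]; exact hu.1
        have hmod : (y + 1) % b = 0 := by rw [hy1]; exact hu.2
        rw [hdiv, hmod, hc]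
        have hz2 : x - (y / b + 1) * a - x1 = z - a := by rw [hzdef]; ring
        rw [hz2]
        -- f (x1 + z%p, b-1).north = f (x1 + (z-a)%p, 0).south
        have h3 := (hf (x1 + z % p) (b - 1)).2.2
        have h4 : b - 1 + 1 = b := by ring
        rw [h4] at h3
        -- f (x1 + z%p, b) = f (x1 + z%p - a, 0)
        have h5 : f (x1 + z % p, b) = f (x1 + z % p - a, 0) := by
          have := hper (x1 + z % p - a) 0
          have he : x1 + z % p - a + a = x1 + z % p := by ring
          rw [he, zero_add] at this
          exact this
        have h6 : (z - a) % p = (z % p - a) % p := by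
          rw [Int.sub_emod z a p, Int.sub_emod (z % p) a p, Int.emod_emod_of_dvd]
          exact dvd_refl p
        have h7 := key (z % p) hm0 hmp 0 le_rfl hb
        have h8 : x1 + (z % p - a) = x1 + z % p - a := by ring
        rw [h8] at h7
        rw [h3, h5, h6, ← h7]
      · have hy1 : y + 1 = b * (y / b) + (y % b + 1) := by linarith [hy]
        have hu := uniqdiv b (y / b) (y % b + 1) hb (by omega) (by omega)
        have hdiv : (y + 1) / b = y / b := by rw [hy1]; exact hu.1
        have hmod : (y + 1) % b = y % b + 1 := by rw [hy1]; exact hu.2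
        rw [hdiv, hmod]
        have h3 := (hf (x1 + z % p) (y % b)).2.2
        exact h3
  · intro x y
    simp only
    have hdiv : (y + p * b) / b = y / b + p := Int.add_mul_ediv_right y p hb.ne'
    have hmod : (y + p * b) % b = y % b := by
      rw [Int.add_mul_emod_self_right]
    rw [hdiv, hmod]
    have he : x - (y / b + p) * a - x1 = (x - (y / b) * a - x1) + p * (-a) := by ring
    rw [he, Int.add_mul_emod_self_left]

lemma iterper (f : ℤ × ℤ → WangTile C) (a : ℤ)
    (h : ∀ x y : ℤ, f (x + a, y) = f (x, y)) :
    ∀ k : ℤ, ∀ x y : ℤ, f (x + k * a, y) = f (x, y) := by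
  intro k
  induction k using Int.induction_on with
  | zero => intro x y; norm_num
  | succ k ih =>
    intro x y
    have h1 : x + (k + 1 : ℤ) * a = (x + a) + k * a := by ring
    rw [h1, ih (x + a) y, h x y]
  | pred k ih =>
    intro x y
    have h1 : x + (-(k : ℤ) - 1) * a + a = x + (-(k : ℤ)) * a := by ring
    have h2 := h (x + (-(k : ℤ) - 1) * a) y
    rw [h1] at h2
    calc f (x + (-(k : ℤ) - 1) * a, y) = f (x + (-(k : ℤ)) * a, y) := h2.symm
      _ = f (x, y) := ih x y


/-- If `W` admits a periodic `ℤ²`-tiling, then it admits a vertically periodic `ℤ²`-tiling. -/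
theorem stmt11 (W : Finset (WangTile C)) (f : ℤ × ℤ → WangTile C)
    (hf : IsZTiling W f) (hper : PeriodicTiling f) :
    ∃ (f' : ℤ × ℤ → WangTile C) (vy : ℤ), IsZTiling W f' ∧ 0 < vy ∧
      ∀ x y : ℤ, f' (x, y) = f' (x, y + vy) := by
  obtain ⟨⟨va, vb⟩, hv0, hv⟩ := hper
  have h1 : ∀ x y : ℤ, f (x + va, y + vb) = f (x, y) := fun x y => hv (x, y)
  have h2 : ∀ x y : ℤ, f (x + -va, y + -vb) = f (x, y) := by
    intro x y
    have := h1 (x - va) (y - vb)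
    have e1 : x - va + va = x := by ring
    have e2 : y - vb + vb = y := by ring
    rw [e1, e2] at this
    have e3 : x + -va = x - va := by ring
    have e4 : y + -vb = y - vb := by ring
    rw [e3, e4, this]
  -- pigeonhole machinery for strip case
  have strip : ∀ a b : ℤ, 0 < b → (∀ x y : ℤ, f (x + a, y + b) = f (x, y)) →
      ∃ (f' : ℤ × ℤ → WangTile C) (vy : ℤ), IsZTiling W f' ∧ 0 < vy ∧
        ∀ x y : ℤ, f' (x, y) = f' (x, y + vy) := by
    intro a b hb hpq
    set N : ℕ := a.natAbs with hN
    set L : ℕ := N + 1 with hL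
    have hW : ∀ x y : ℤ, f (x, y) ∈ W := fun x y => (hf x y).1
    set D : ℕ → Fin (2 * N + 1) → Fin b.toNat → {w : WangTile C // w ∈ W} :=
      fun k i r => ⟨f ((k * L : ℕ) - (N : ℤ) + (i : ℤ), (r : ℤ)), hW _ _⟩ with hD
    obtain ⟨k1, k2, hne, hDeq⟩ := Finite.exists_ne_map_eq_of_infinite D
    have main : ∀ k1 k2 : ℕ, k1 < k2 → D k1 = D k2 →
        ∃ (f' : ℤ × ℤ → WangTile C) (vy : ℤ), IsZTiling W f' ∧ 0 < vy ∧
          ∀ x y : ℤ, f' (x, y) = f' (x, y + vy) := by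
      intro k1 k2 hlt hDe
      have hA : k1 * L + L ≤ k2 * L := by
        have h' : (k1 + 1) * L ≤ k2 * L := Nat.mul_le_mul_right L (by omega)
        calc k1 * L + L = (k1 + 1) * L := by ring
          _ ≤ k2 * L := h'
      have hAz : ((k1 * L : ℕ) : ℤ) + ((L : ℕ) : ℤ) ≤ ((k2 * L : ℕ) : ℤ) := by
        exact_mod_cast hA
      have hNL : ((a.natAbs : ℕ) : ℤ) < ((L : ℕ) : ℤ) := by
        have : N < L := Nat.lt_succ_self N
        exact_mod_cast this
      apply stripCase W f hf a b ((k1 * L : ℕ) : ℤ) (((k2 * L : ℕ) : ℤ) - ((k1 * L : ℕ) : ℤ))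
        hb
      · omega
      · omega
      · exact hpq
      · intro j r hj1 hj2 hr0 hrb
        have hi : (j + N).toNat < 2 * N + 1 := by omega
        have hrn : r.toNat < b.toNat := by omega
        have h := congrArg Subtype.val
          (congrFun (congrFun hDe ⟨(j + N).toNat, hi⟩) ⟨r.toNat, hrn⟩)
        simp only [hD] at h
        have e1 : (((j + (N : ℤ)).toNat : ℕ) : ℤ) = j + N := Int.toNat_of_nonneg (by omega)
        have e2 : ((r.toNat : ℕ) : ℤ) = r := Int.toNat_of_nonneg hr0
        rw [e1, e2] at h
        have e3 : ((k1 * L : ℕ) : ℤ) - (N : ℤ) + (j + (N : ℤ)) = ((k1 * L : ℕ) : ℤ) + j := by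
          ring
        have e4 : ((k2 * L : ℕ) : ℤ) - (N : ℤ) + (j + (N : ℤ)) =
            ((k1 * L : ℕ) : ℤ) + (((k2 * L : ℕ) : ℤ) - ((k1 * L : ℕ) : ℤ)) + j := by ring
        rw [e3, e4] at h
        exact h
    rcases lt_or_gt_of_ne hne with h | h
    · exact main k1 k2 h hDeq
    · exact main k2 k1 h hDeq.symm
  rcases lt_trichotomy vb 0 with hb | hb | hb
  · exact strip (-va) (-vb) (by omega) h2
  · -- vb = 0, horizontal period
    have hva : va ≠ 0 := by
      intro hcon
      apply hv0
      simp [hcon, hb, Prod.ext_iff]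
    have hrow : ∀ a : ℤ, 0 < a → (∀ x y : ℤ, f (x + a, y) = f (x, y)) →
        ∃ (f' : ℤ × ℤ → WangTile C) (vy : ℤ), IsZTiling W f' ∧ 0 < vy ∧
          ∀ x y : ℤ, f' (x, y) = f' (x, y + vy) := by
      intro a ha hpq
      have hit := iterper f a hpq
      have hW : ∀ x y : ℤ, f (x, y) ∈ W := fun x y => (hf x y).1
      set D : ℕ → Fin a.toNat → {w : WangTile C // w ∈ W} :=
        fun k i => ⟨f ((i : ℤ), (k : ℤ)), hW _ _⟩ with hD
      obtain ⟨k1, k2, hne, hDeq⟩ := Finite.exists_ne_map_eq_of_infinite D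
      have rowext : ∀ k1 k2 : ℕ, D k1 = D k2 → ∀ x : ℤ, f (x, (k1 : ℤ)) = f (x, (k2 : ℤ)) := by
        intro k1 k2 hDe x
        have hx0 : 0 ≤ x % a := Int.emod_nonneg _ ha.ne'
        have hxa : x % a < a := Int.emod_lt_of_pos _ ha
        have hxi : (x % a).toNat < a.toNat := by omega
        have h5 := congrArg Subtype.val (congrFun hDe ⟨(x % a).toNat, hxi⟩)
        simp only [hD] at h5
        have e1 : (((x % a).toNat : ℕ) : ℤ) = x % a := Int.toNat_of_nonneg hx0
        rw [e1] at h5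
        have ex : x = x % a + (x / a) * a := by
          have := Int.mul_ediv_add_emod x a; linarith
        calc f (x, (k1 : ℤ)) = f (x % a + (x / a) * a, (k1 : ℤ)) := by rw [← ex]
          _ = f (x % a, (k1 : ℤ)) := hit (x / a) (x % a) (k1 : ℤ)
          _ = f (x % a, (k2 : ℤ)) := h5
          _ = f (x % a + (x / a) * a, (k2 : ℤ)) := (hit (x / a) (x % a) (k2 : ℤ)).symm
          _ = f (x, (k2 : ℤ)) := by rw [← ex]
      have main : ∀ k1 k2 : ℕ, k1 < k2 → D k1 = D k2 →
          ∃ (f' : ℤ × ℤ → WangTile C) (vy : ℤ), IsZTiling W f' ∧ 0 < vy ∧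
            ∀ x y : ℤ, f' (x, y) = f' (x, y + vy) := by
        intro k1 k2 hlt hDe
        exact rowCase W f hf k1 k2 (by exact_mod_cast hlt) (rowext k1 k2 hDe)
      rcases lt_or_gt_of_ne hne with h | h
      · exact main k1 k2 h hDeq
      · exact main k2 k1 h hDeq.symm
    rcases lt_trichotomy va 0 with ha | ha | ha
    · refine hrow (-va) (by omega) ?_
      intro x y
      have := h2 x y
      rw [hb] at this
      simpa using this
    · exact absurd ha hva
    · refine hrow va ha ?_
      intro x y
      have := h1 x y
      rw [hb] at this
      simpa using this
  · exact strip va vb hb h1
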